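/- More general master inequality: for every normed space X of dimension d, every real λ > 1 and every integer J ≥ 2, one has Γ(X) ≥ J^{-1}·(λ(1 + 2λ^{1-J}))^{-d}·γ(X). -/

import Mathlib

open MeasureTheory Metric

/-- `ballsUnion μ C` is the measure of the union of the closed balls encoded (center, radius)
by the finite collection `C`. -/
noncomputable def ballsUnion {X : Type*} [NormedAddCommGroup X] [MeasurableSpace X]
    (μ : Measure X) (C : Finset (X × ℝ)) : ℝ :=
  (μ (⋃ p ∈ C, closedBall p.1 p.2)).toReal

/-- A collection of (center, radius) pairs encodes pairwise disjoint closed balls. -/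
def DisjointBalls {X : Type*} [NormedAddCommGroup X] (S : Finset (X × ℝ)) : Prop :=
  (S : Set (X × ℝ)).Pairwise fun p q => Disjoint (closedBall p.1 p.2) (closedBall q.1 q.2)

/-- `Phi μ C` is the largest fraction of the measure of the union of the balls of `C`
occupied by a pairwise disjoint subcollection of `C`. -/
noncomputable def Phi {X : Type*} [NormedAddCommGroup X] [MeasurableSpace X]
    (μ : Measure X) (C : Finset (X × ℝ)) : ℝ :=
  ⨆ S : {S : Finset (X × ℝ) // S ⊆ C ∧ DisjointBalls S},
    ballsUnion μ S.1 / ballsUnion μ C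

/-- `vitaliGamma μ S` is the optimal Vitali covering constant `Γ(X; S)` for finite
collections of closed balls with radii in `S`. -/
noncomputable def vitaliGamma {X : Type*} [NormedAddCommGroup X] [MeasurableSpace X]
    (μ : Measure X) (S : Set ℝ) : ℝ :=
  ⨅ C : {C : Finset (X × ℝ) // C.Nonempty ∧ ∀ p ∈ C, p.2 ∈ S}, Phi μ C.1

section Aux

open scoped ENNReal Classical Pointwise
set_option linter.unusedSectionVars false

variable {X : Type*} [NormedAddCommGroup X] [NormedSpace ℝ X] [FiniteDimensional ℝ X]
  [MeasurableSpace X] [BorelSpace X] (μ : Measure X) [μ.IsAddHaarMeasure]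

lemma aux_measure_biUnion_ne_top {ι : Type*} (T : Finset ι) (c : ι → X) (r : ι → ℝ) :
    μ (⋃ i ∈ T, closedBall (c i) (r i)) ≠ ∞ :=
  (IsCompact.measure_lt_top
    (T.isCompact_biUnion fun i _ => isCompact_closedBall (c i) (r i))).ne

lemma aux_ballsUnion_nonneg (C : Finset (X × ℝ)) : 0 ≤ ballsUnion μ C :=
  ENNReal.toReal_nonneg

lemma aux_ballsUnion_mono {S C : Finset (X × ℝ)} (h : S ⊆ C) :
    ballsUnion μ S ≤ ballsUnion μ C := by
  refine ENNReal.toReal_mono (aux_measure_biUnion_ne_top μ C Prod.fst Prod.snd) ?_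
  exact measure_mono (Set.biUnion_subset_biUnion_left h)

lemma aux_Phi_nonneg (C : Finset (X × ℝ)) : 0 ≤ Phi μ C :=
  Real.iSup_nonneg fun S =>
    div_nonneg (aux_ballsUnion_nonneg μ S.1) (aux_ballsUnion_nonneg μ C)

lemma aux_le_Phi {C S : Finset (X × ℝ)} (hS : S ⊆ C) (hdisj : DisjointBalls S) :
    ballsUnion μ S / ballsUnion μ C ≤ Phi μ C := by
  refine le_ciSup (f := fun S : {S : Finset (X × ℝ) // S ⊆ C ∧ DisjointBalls S} =>
    ballsUnion μ S.1 / ballsUnion μ C) ?_ ⟨S, hS, hdisj⟩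
  refine ⟨1, ?_⟩
  rintro x ⟨T, rfl⟩
  exact div_le_one_of_le₀ (aux_ballsUnion_mono μ T.2.1) (aux_ballsUnion_nonneg μ C)

lemma aux_gamma_nonneg : 0 ≤ vitaliGamma μ {1} := by
  have : Nonempty {C : Finset (X × ℝ) // C.Nonempty ∧ ∀ p ∈ C, p.2 ∈ ({1} : Set ℝ)} :=
    ⟨⟨{((0 : X), (1 : ℝ))}, Finset.singleton_nonempty _, by simp⟩⟩
  exact le_ciInf fun C => aux_Phi_nonneg μ C.1

/-- Fixed-radius extraction lemma: from any finite family of closed balls of common radius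
`s > 0`, one can extract a pairwise disjoint subfamily capturing a `γ` fraction of the
measure of the union. -/
lemma aux_lemA (T : Finset (X × ℝ)) {s : ℝ} (hs : 0 < s) :
    ∃ Z : Finset X, (∀ x ∈ Z, ∃ p ∈ T, p.1 = x) ∧
      ((Z : Set X).Pairwise fun x y => Disjoint (closedBall x s) (closedBall y s)) ∧
      ENNReal.ofReal (vitaliGamma μ {1}) * μ (⋃ p ∈ T, closedBall p.1 s)
        ≤ μ (⋃ x ∈ Z, closedBall x s) := by
  rcases T.eq_empty_or_nonempty with rfl | hT
  · exact ⟨∅, by simp, by simp, by simp⟩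
  set γ := vitaliGamma μ {1} with hγdef
  have hγ0 : 0 ≤ γ := aux_gamma_nonneg μ
  set f : X × ℝ → X × ℝ := fun p => (s⁻¹ • p.1, (1 : ℝ)) with hf
  set D : Finset (X × ℝ) := T.image f with hD
  have hD1 : D.Nonempty := hT.image f
  have hD2 : ∀ p ∈ D, p.2 ∈ ({1} : Set ℝ) := by
    intro p hp
    rcases Finset.mem_image.1 hp with ⟨q, _, rfl⟩
    simp [f]
  -- γ is at most Phi μ D
  have hγD : γ ≤ Phi μ D := by
    have hbdd : BddBelow (Set.range fun C : {C : Finset (X × ℝ) //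
        C.Nonempty ∧ ∀ p ∈ C, p.2 ∈ ({1} : Set ℝ)} => Phi μ C.1) := by
      refine ⟨0, ?_⟩
      rintro x ⟨C, rfl⟩
      exact aux_Phi_nonneg μ C.1
    exact ciInf_le hbdd ⟨D, hD1, hD2⟩
  -- Phi μ D is attained
  haveI : Finite {S : Finset (X × ℝ) // S ⊆ D ∧ DisjointBalls S} := by
    refine Finite.of_injective (fun S => (⟨S.1, Finset.mem_powerset.2 S.2.1⟩ :
      {S : Finset (X × ℝ) // S ∈ D.powerset})) ?_
    intro a b h
    simp only [Subtype.mk.injEq] at h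
    exact Subtype.ext h
  haveI : Nonempty {S : Finset (X × ℝ) // S ⊆ D ∧ DisjointBalls S} :=
    ⟨⟨∅, Finset.empty_subset _, by simp [DisjointBalls]⟩⟩
  obtain ⟨S₀, hmax⟩ := Finite.exists_max (fun S : {S : Finset (X × ℝ) // S ⊆ D ∧
    DisjointBalls S} => ballsUnion μ S.1 / ballsUnion μ D)
  have hγS : γ ≤ ballsUnion μ S₀.1 / ballsUnion μ D := hγD.trans (ciSup_le hmax)
  obtain ⟨S₀, hS₀D, hS₀disj⟩ := S₀
  simp only at hγS
  -- the candidate disjoint family of centers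
  set Z : Finset X := S₀.image (fun p => s • p.1) with hZ
  have hsne : s ≠ 0 := hs.ne'
  have hsinvne : s⁻¹ ≠ 0 := inv_ne_zero hsne
  have hZT : ∀ x ∈ Z, ∃ p ∈ T, p.1 = x := by
    intro x hx
    rcases Finset.mem_image.1 hx with ⟨p, hp, rfl⟩
    rcases Finset.mem_image.1 (hS₀D hp) with ⟨q, hq, rfl⟩
    exact ⟨q, hq, by simp [f, smul_inv_smul₀ hsne]⟩
  have hsmul : ∀ x : X, s⁻¹ • closedBall x s = closedBall (s⁻¹ • x) 1 := by
    intro x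
    rw [smul_closedBall' hsinvne x s]
    congr 1
    rw [norm_inv, Real.norm_eq_abs, abs_of_pos hs, inv_mul_cancel₀ hsne]
  have hsnd : ∀ p ∈ S₀, p.2 = 1 := by
    intro p hp
    rcases Finset.mem_image.1 (hS₀D hp) with ⟨q, _, rfl⟩
    simp [f]
  -- set identities
  have fact1 : (⋃ p ∈ D, closedBall p.1 p.2) = s⁻¹ • ⋃ p ∈ T, closedBall p.1 s := by
    rw [hD, Finset.set_biUnion_finset_image, Set.smul_set_iUnion₂]
    refine Set.iUnion₂_congr fun p hp => ?_
    simp only [hf]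
    exact (hsmul p.1).symm
  have fact2 : (⋃ p ∈ S₀, closedBall p.1 p.2) = s⁻¹ • ⋃ x ∈ Z, closedBall x s := by
    rw [hZ, Finset.set_biUnion_finset_image, Set.smul_set_iUnion₂]
    refine Set.iUnion₂_congr fun p hp => ?_
    rw [hsmul (s • p.1), inv_smul_smul₀ hsne, hsnd p hp]
  -- disjointness of the extracted family
  have hZdisj : (Z : Set X).Pairwise fun x y => Disjoint (closedBall x s) (closedBall y s) := by
    intro x hx y hy hxy
    rcases Finset.mem_coe.1 hx with hx'
    rcases Finset.mem_image.1 hx' with ⟨p, hp, rfl⟩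
    rcases Finset.mem_image.1 (Finset.mem_coe.1 hy) with ⟨q, hq, rfl⟩
    have hpq : p ≠ q := by rintro rfl; exact hxy rfl
    have hdis : Disjoint (closedBall p.1 p.2) (closedBall q.1 q.2) :=
      hS₀disj (Finset.mem_coe.2 hp) (Finset.mem_coe.2 hq) hpq
    rw [hsnd p hp, hsnd q hq] at hdis
    have h1 : closedBall (s • p.1) s = s • closedBall p.1 1 := by
      rw [smul_closedBall' hsne p.1 1, Real.norm_eq_abs, abs_of_pos hs, mul_one]
    have h2 : closedBall (s • q.1) s = s • closedBall q.1 1 := by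
      rw [smul_closedBall' hsne q.1 1, Real.norm_eq_abs, abs_of_pos hs, mul_one]
    rw [h1, h2, ← Set.image_smul, ← Set.image_smul]
    exact (Set.disjoint_image_iff (smul_right_injective X hsne)).2 hdis
  refine ⟨Z, hZT, hZdisj, ?_⟩
  -- measure computations
  set U := ⋃ p ∈ T, closedBall p.1 s with hU
  set V := ⋃ x ∈ Z, closedBall x s with hV
  have hUfin : μ U ≠ ∞ := aux_measure_biUnion_ne_top μ T Prod.fst (fun _ => s)
  have hVfin : μ V ≠ ∞ := aux_measure_biUnion_ne_top μ Z id (fun _ => s)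
  set dr := Module.finrank ℝ X with hdr
  set c : ℝ := (s⁻¹) ^ dr with hc
  have hcpos : 0 < c := pow_pos (inv_pos.2 hs) dr
  have hmeasD : ballsUnion μ D = c * (μ U).toReal := by
    rw [ballsUnion, fact1, μ.addHaar_smul_of_nonneg (inv_nonneg.2 hs.le),
      ENNReal.toReal_mul, ENNReal.toReal_ofReal (by positivity)]
  have hmeasS : ballsUnion μ S₀ = c * (μ V).toReal := by
    rw [ballsUnion, fact2, μ.addHaar_smul_of_nonneg (inv_nonneg.2 hs.le),
      ENNReal.toReal_mul, ENNReal.toReal_ofReal (by positivity)]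
  have hratio : γ ≤ (μ V).toReal / (μ U).toReal := by
    rw [hmeasD, hmeasS] at hγS
    rwa [mul_div_mul_left _ _ hcpos.ne'] at hγS
  rcases eq_or_ne (μ U) 0 with hU0 | hU0
  · rw [hU0, mul_zero]; exact zero_le
  · have hupos : 0 < (μ U).toReal := ENNReal.toReal_pos hU0 hUfin
    have hkey : γ * (μ U).toReal ≤ (μ V).toReal := by
      rw [← le_div_iff₀ hupos] at *
      exact hratio
    calc ENNReal.ofReal γ * μ U = ENNReal.ofReal γ * ENNReal.ofReal (μ U).toReal := by
          rw [ENNReal.ofReal_toReal hUfin]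
      _ = ENNReal.ofReal (γ * (μ U).toReal) := (ENNReal.ofReal_mul hγ0).symm
      _ ≤ ENNReal.ofReal (μ V).toReal := ENNReal.ofReal_le_ofReal hkey
      _ = μ V := ENNReal.ofReal_toReal hVfin

/-- The inductive multi-scale extraction lemma. -/
lemma aux_lemB {l : ℝ} (hl : 1 < l) {J : ℕ} (hJ : 2 ≤ J) :
    ∀ n : ℕ, ∀ E : Finset (X × ℝ), E.card ≤ n →
    ∀ b : X × ℝ → ℝ,
    (∀ p ∈ E, b p / l < p.2 ∧ p.2 ≤ b p) →
    (∀ p ∈ E, ∀ q ∈ E, b p = b q ∨ l ^ J * b p ≤ b q ∨ l ^ J * b q ≤ b p) →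
    ∃ S, S ⊆ E ∧ DisjointBalls S ∧
      ENNReal.ofReal (vitaliGamma μ {1}) * μ (⋃ p ∈ E, closedBall p.1 p.2)
        ≤ ENNReal.ofReal ((l * (1 + 2 * l ^ (1 - (J : ℝ)))) ^ (Module.finrank ℝ X))
            * μ (⋃ p ∈ S, closedBall p.1 p.2) := by
  have hl0 : (0 : ℝ) < l := lt_trans zero_lt_one hl
  set γ := vitaliGamma μ {1} with hγdef
  have hγ0 : 0 ≤ γ := aux_gamma_nonneg μ
  set σ : ℝ := 1 + 2 * l ^ (1 - (J : ℝ)) with hσ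
  have hσ1 : 1 ≤ σ := by
    have : (0 : ℝ) < l ^ (1 - (J : ℝ)) := Real.rpow_pos_of_pos hl0 _
    nlinarith
  have hσ0 : 0 < σ := lt_of_lt_of_le zero_lt_one hσ1
  set g : ℝ := l * σ with hg
  have hg0 : 0 < g := mul_pos hl0 hσ0
  set dr := Module.finrank ℝ X with hdr
  -- key: (l^J)⁻¹ ≤ l^(1-J)
  have hpowJ : (l ^ J)⁻¹ ≤ l ^ (1 - (J : ℝ)) := by
    have h1 : l ^ (1 - (J : ℝ)) = l * (l ^ J)⁻¹ := by
      rw [sub_eq_add_neg, Real.rpow_add hl0, Real.rpow_one, Real.rpow_neg hl0.le,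
        Real.rpow_natCast]
    rw [h1]
    nlinarith [inv_pos.2 (pow_pos hl0 J), hl]
  intro n
  induction n with
  | zero =>
    intro E hcard b hb htri
    have : E = ∅ := Finset.card_eq_zero.1 (Nat.le_zero.1 hcard)
    subst this
    exact ⟨∅, Finset.Subset.refl _, by simp [DisjointBalls], by simp⟩
  | succ n ih =>
    intro E hcard b hb htri
    rcases E.eq_empty_or_nonempty with rfl | hE
    · exact ⟨∅, Finset.Subset.refl _, by simp [DisjointBalls], by simp⟩
    -- the top scale
    obtain ⟨p₀, hp₀E, hp₀max⟩ := E.exists_max_image b hE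
    set β := b p₀ with hβ
    have hrpos : ∀ p ∈ E, 0 < p.2 := by
      intro p hp
      obtain ⟨h1, h2⟩ := hb p hp
      have h3 : b p < p.2 * l := (div_lt_iff₀ hl0).1 h1
      by_contra hneg
      push_neg at hneg
      nlinarith
    have hβ0 : 0 < β := lt_of_lt_of_le (hrpos p₀ hp₀E) (hb p₀ hp₀E).2
    set T := E.filter (fun p => b p = β) with hT
    set E' := E.filter (fun p => b p ≠ β) with hE'
    have hp₀T : p₀ ∈ T := Finset.mem_filter.2 ⟨hp₀E, rfl⟩
    have hsmall : ∀ p ∈ E', p.2 ≤ β * (l ^ J)⁻¹ := by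
      intro p hp
      obtain ⟨hpE, hpne⟩ := Finset.mem_filter.1 hp
      rcases htri p hpE p₀ hp₀E with h | h | h
      · exact absurd h hpne
      · have hbp : b p ≤ β * (l ^ J)⁻¹ := by
          rw [← div_eq_mul_inv, le_div_iff₀ (pow_pos hl0 J)]
          nlinarith
        exact le_trans (hb p hpE).2 hbp
      · exfalso
        have h1 : b p ≤ β := hp₀max p hpE
        have h2 : (1 : ℝ) < l ^ J := one_lt_pow₀ hl (by omega)
        nlinarith
    set s := β * σ with hs'
    have hs : 0 < s := mul_pos hβ0 hσ0
    obtain ⟨Z, hZT, hZdisj, hZmeas⟩ := aux_lemA μ T hs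
    -- choose representative pairs for the centers in Z
    set pick : X → X × ℝ := fun x => if h : ∃ p ∈ T, p.1 = x then h.choose else (x, 0)
      with hpick
    have hpickT : ∀ x ∈ Z, pick x ∈ T ∧ (pick x).1 = x := by
      intro x hx
      have h : ∃ p ∈ T, p.1 = x := hZT x hx
      rw [hpick]
      simp only [dif_pos h]
      exact ⟨h.choose_spec.1, h.choose_spec.2⟩
    set Stop := Z.image pick with hStop
    have hStopT : Stop ⊆ T := by
      intro q hq
      rcases Finset.mem_image.1 hq with ⟨x, hx, rfl⟩
      exact (hpickT x hx).1
    have hStopE : Stop ⊆ E := hStopT.trans (Finset.filter_subset _ _)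
    have hinj : Set.InjOn pick (Z : Set X) := by
      intro x hx y hy hxy
      rw [← (hpickT x hx).2, ← (hpickT y hy).2, hxy]
    have hTsnd : ∀ q ∈ T, β / l < q.2 ∧ q.2 ≤ β := by
      intro q hq
      obtain ⟨hqE, hqβ⟩ := Finset.mem_filter.1 hq
      have := hb q hqE
      rw [hqβ] at this
      exact this
    -- the recursive family
    set E'' := E'.filter (fun p => ∀ x ∈ Z, Disjoint (closedBall p.1 p.2) (closedBall x β))
      with hE''
    have hE''E : E'' ⊆ E := (Finset.filter_subset _ _).trans (Finset.filter_subset _ _)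
    have hE''card : E''.card ≤ n := by
      have h1 : E' ⊂ E := by
        refine ⟨Finset.filter_subset _ _, fun hsub => ?_⟩
        have := Finset.mem_filter.1 (hsub hp₀E)
        exact this.2 rfl
      have h2 : E'.card < E.card := Finset.card_lt_card h1
      have h3 : E''.card ≤ E'.card := Finset.card_le_card (Finset.filter_subset _ _)
      omega
    obtain ⟨Srec, hSrecE'', hSrecdisj, hSrecmeas⟩ := ih E'' hE''card b
      (fun p hp => hb p (hE''E hp)) (fun p hp q hq => htri p (hE''E hp) q (hE''E hq))
    set S := Stop ∪ Srec with hS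
    have hSrecE : Srec ⊆ E := hSrecE''.trans hE''E
    -- disjointness between Stop and Srec balls
    have hcross : ∀ p ∈ Srec, ∀ q ∈ Stop,
        Disjoint (closedBall p.1 p.2) (closedBall q.1 q.2) := by
      intro p hp q hq
      have hpE'' := hSrecE'' hp
      have hpcond := (Finset.mem_filter.1 hpE'').2
      rcases Finset.mem_image.1 hq with ⟨x, hx, rfl⟩
      have h1 : (pick x).1 = x := (hpickT x hx).2
      have h2 : (pick x).2 ≤ β := (hTsnd _ ((hpickT x hx).1)).2
      have h3 : Disjoint (closedBall p.1 p.2) (closedBall x β) := hpcond x hx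
      exact h3.mono_right (by rw [h1]; exact closedBall_subset_closedBall h2)
    -- disjointness within Stop
    have htop : ∀ q ∈ Stop, ∀ q' ∈ Stop, q ≠ q' →
        Disjoint (closedBall q.1 q.2) (closedBall q'.1 q'.2) := by
      intro q hq q' hq' hne
      rcases Finset.mem_image.1 hq with ⟨x, hx, rfl⟩
      rcases Finset.mem_image.1 hq' with ⟨y, hy, rfl⟩
      have hxy : x ≠ y := by rintro rfl; exact hne rfl
      have hdis := hZdisj (Finset.mem_coe.2 hx) (Finset.mem_coe.2 hy) hxy
      refine hdis.mono ?_ ?_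
      · rw [show closedBall x s = closedBall (pick x).1 s by rw [(hpickT x hx).2]]
        refine closedBall_subset_closedBall ?_
        calc (pick x).2 ≤ β := (hTsnd _ ((hpickT x hx).1)).2
          _ ≤ β * σ := le_mul_of_one_le_right hβ0.le hσ1
      · rw [show closedBall y s = closedBall (pick y).1 s by rw [(hpickT y hy).2]]
        refine closedBall_subset_closedBall ?_
        calc (pick y).2 ≤ β := (hTsnd _ ((hpickT y hy).1)).2
          _ ≤ β * σ := le_mul_of_one_le_right hβ0.le hσ1
    have hSdisj : DisjointBalls S := by
      intro p hp q hq hne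
      rw [Finset.coe_union, Set.mem_union] at hp hq
      rcases hp with hp | hp <;> rcases hq with hq | hq
      · exact htop p (Finset.mem_coe.1 hp) q (Finset.mem_coe.1 hq) hne
      · exact (hcross q (Finset.mem_coe.1 hq) p (Finset.mem_coe.1 hp)).symm
      · exact hcross p (Finset.mem_coe.1 hp) q (Finset.mem_coe.1 hq)
      · exact hSrecdisj hp hq hne
    refine ⟨S, Finset.union_subset hStopE hSrecE, hSdisj, ?_⟩
    -- coverage
    have hcover : (⋃ p ∈ E, closedBall p.1 p.2) ⊆
        (⋃ p ∈ T, closedBall p.1 s) ∪ (⋃ p ∈ E'', closedBall p.1 p.2) := by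
      intro y hy
      rw [Set.mem_iUnion₂] at hy
      obtain ⟨p, hpE, hyp⟩ := hy
      by_cases hpβ : b p = β
      · left
        rw [Set.mem_iUnion₂]
        refine ⟨p, Finset.mem_filter.2 ⟨hpE, hpβ⟩, ?_⟩
        refine closedBall_subset_closedBall ?_ hyp
        calc p.2 ≤ b p := (hb p hpE).2
          _ = β := hpβ
          _ ≤ β * σ := le_mul_of_one_le_right hβ0.le hσ1
      · have hpE' : p ∈ E' := Finset.mem_filter.2 ⟨hpE, hpβ⟩
        by_cases hpcond : ∀ x ∈ Z, Disjoint (closedBall p.1 p.2) (closedBall x β)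
        · right
          rw [Set.mem_iUnion₂]
          exact ⟨p, Finset.mem_filter.2 ⟨hpE', hpcond⟩, hyp⟩
        · left
          push_neg at hpcond
          obtain ⟨x, hxZ, hxdis⟩ := hpcond
          obtain ⟨z, hz1, hz2⟩ := Set.not_disjoint_iff.1 hxdis
          rw [Set.mem_iUnion₂]
          obtain ⟨q, hqT, hqx⟩ := hZT x hxZ
          refine ⟨q, hqT, ?_⟩
          rw [mem_closedBall]
          rw [hqx]
          have hd1 : dist y x ≤ dist y p.1 + dist p.1 z + dist z x :=
            (dist_triangle y p.1 x).trans (by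
              have := dist_triangle p.1 z x
              linarith)
          have hyp' : dist y p.1 ≤ p.2 := mem_closedBall.1 hyp
          have hz1' : dist p.1 z ≤ p.2 := by
            rw [dist_comm]; exact mem_closedBall.1 hz1
          have hz2' : dist z x ≤ β := mem_closedBall.1 hz2
          have hp2 : p.2 ≤ β * (l ^ J)⁻¹ := hsmall p hpE'
          have hβJ : β * (l ^ J)⁻¹ ≤ β * l ^ (1 - (J : ℝ)) :=
            mul_le_mul_of_nonneg_left hpowJ hβ0.le
          calc dist y x ≤ dist y p.1 + dist p.1 z + dist z x := hd1
            _ ≤ p.2 + p.2 + β := by linarith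
            _ ≤ β * l ^ (1 - (J : ℝ)) + β * l ^ (1 - (J : ℝ)) + β := by linarith
            _ = β * σ := by rw [hσ]; ring
    -- measure arithmetic
    set μB := μ (closedBall (0 : X) 1) with hμB
    have hμBfin : μB ≠ ∞ := (IsCompact.measure_lt_top (isCompact_closedBall _ _)).ne
    have hstep1 : μ (⋃ p ∈ E, closedBall p.1 p.2) ≤
        μ (⋃ p ∈ T, closedBall p.1 s) + μ (⋃ p ∈ E'', closedBall p.1 p.2) :=
      (measure_mono hcover).trans (measure_union_le _ _)
    -- top-scale measure bound
    have hZmeasure : μ (⋃ x ∈ Z, closedBall x s)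
        = Z.card * (ENNReal.ofReal (s ^ dr) * μB) := by
      rw [measure_biUnion_finset hZdisj (fun x _ => measurableSet_closedBall)]
      rw [Finset.sum_congr rfl (fun x _ => μ.addHaar_closedBall' x hs.le)]
      simp [Finset.sum_const, nsmul_eq_mul, hμB, hdr]
    have hStopdisjcoe : (Stop : Set (X × ℝ)).PairwiseDisjoint
        (fun p => closedBall p.1 p.2) := by
      intro p hp q hq hne
      exact htop p (Finset.mem_coe.1 hp) q (Finset.mem_coe.1 hq) hne
    have hStopmeasure : μ (⋃ p ∈ Stop, closedBall p.1 p.2)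
        = ∑ p ∈ Stop, μ (closedBall p.1 p.2) :=
      measure_biUnion_finset hStopdisjcoe (fun p _ => measurableSet_closedBall)
    have hballlower : ∀ q ∈ Stop,
        ENNReal.ofReal ((β / l) ^ dr) * μB ≤ μ (closedBall q.1 q.2) := by
      intro q hq
      have h1 : β / l < q.2 := (hTsnd q (hStopT hq)).1
      have h2 : 0 ≤ β / l := div_nonneg hβ0.le hl0.le
      rw [μ.addHaar_closedBall' q.1 (h2.trans h1.le)]
      exact mul_le_mul_left (ENNReal.ofReal_le_ofReal
        (pow_le_pow_left₀ h2 h1.le dr)) μB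
    have hcardeq : Stop.card = Z.card := Finset.card_image_of_injOn hinj
    have hfactor : (s : ℝ) ^ dr = g ^ dr * (β / l) ^ dr := by
      rw [← mul_pow]
      congr 1
      rw [hg, hs']
      field_simp
    have htopchain : ENNReal.ofReal γ * μ (⋃ p ∈ T, closedBall p.1 s)
        ≤ ENNReal.ofReal (g ^ dr) * μ (⋃ p ∈ Stop, closedBall p.1 p.2) := by
      refine hZmeas.trans ?_
      rw [hZmeasure]
      have h1 : (Z.card : ℝ≥0∞) * (ENNReal.ofReal (s ^ dr) * μB)
          = ENNReal.ofReal (g ^ dr) * ((Z.card : ℝ≥0∞)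
            * (ENNReal.ofReal ((β / l) ^ dr) * μB)) := by
        rw [hfactor, ENNReal.ofReal_mul (by positivity)]
        ring
      rw [h1]
      refine mul_le_mul_right ?_ _
      rw [hStopmeasure]
      calc (Z.card : ℝ≥0∞) * (ENNReal.ofReal ((β / l) ^ dr) * μB)
          = ∑ _p ∈ Stop, (ENNReal.ofReal ((β / l) ^ dr) * μB) := by
            rw [Finset.sum_const, nsmul_eq_mul, hcardeq]
        _ ≤ ∑ p ∈ Stop, μ (closedBall p.1 p.2) :=
            Finset.sum_le_sum hballlower
    -- union splitting for S
    have hunion : (⋃ p ∈ S, closedBall p.1 p.2)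
        = (⋃ p ∈ Stop, closedBall p.1 p.2) ∪ (⋃ p ∈ Srec, closedBall p.1 p.2) := by
      rw [hS]
      exact Finset.set_biUnion_union _ _ _
    have hdisjUnion : Disjoint (⋃ p ∈ Stop, closedBall p.1 p.2)
        (⋃ p ∈ Srec, closedBall p.1 p.2) := by
      rw [Set.disjoint_iUnion₂_left]
      intro q hq
      rw [Set.disjoint_iUnion₂_right]
      intro p hp
      exact (hcross p hp q hq).symm
    have hmeasS : μ (⋃ p ∈ S, closedBall p.1 p.2)
        = μ (⋃ p ∈ Stop, closedBall p.1 p.2) + μ (⋃ p ∈ Srec, closedBall p.1 p.2) := by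
      rw [hunion]
      exact measure_union hdisjUnion
        (Finset.measurableSet_biUnion _ (fun p _ => measurableSet_closedBall))
    calc ENNReal.ofReal γ * μ (⋃ p ∈ E, closedBall p.1 p.2)
        ≤ ENNReal.ofReal γ * (μ (⋃ p ∈ T, closedBall p.1 s)
            + μ (⋃ p ∈ E'', closedBall p.1 p.2)) := mul_le_mul_right hstep1 _
      _ = ENNReal.ofReal γ * μ (⋃ p ∈ T, closedBall p.1 s)
            + ENNReal.ofReal γ * μ (⋃ p ∈ E'', closedBall p.1 p.2) := mul_add _ _ _
      _ ≤ ENNReal.ofReal (g ^ dr) * μ (⋃ p ∈ Stop, closedBall p.1 p.2)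
            + ENNReal.ofReal (g ^ dr) * μ (⋃ p ∈ Srec, closedBall p.1 p.2) :=
          add_le_add htopchain hSrecmeas
      _ = ENNReal.ofReal (g ^ dr) * μ (⋃ p ∈ S, closedBall p.1 p.2) := by
          rw [hmeasS, mul_add]

end Aux

/-- Master inequality: for every normed space `X` of dimension `d`, real `λ > 1` and
integer `J ≥ 2`, `Γ(X) ≥ J⁻¹·(λ(1 + 2λ^{1-J}))^{-d}·γ(X)`. -/
theorem stmt_17 {X : Type*} [NormedAddCommGroup X] [NormedSpace ℝ X] [FiniteDimensional ℝ X]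
    [MeasurableSpace X] [BorelSpace X] (μ : Measure X) [μ.IsAddHaarMeasure]
    (d : ℕ) (hd : Module.finrank ℝ X = d) (l : ℝ) (hl : 1 < l) (J : ℕ) (hJ : 2 ≤ J) :
    (J : ℝ)⁻¹ * ((l * (1 + 2 * l ^ (1 - (J : ℝ))))⁻¹) ^ d * vitaliGamma μ {1}
      ≤ vitaliGamma μ (Set.Ioi 0) := by
  classical
  have hl0 : (0 : ℝ) < l := lt_trans zero_lt_one hl
  have hlne1 : l ≠ 1 := hl.ne'
  set γ := vitaliGamma μ {1} with hγdef
  have hγ0 : 0 ≤ γ := aux_gamma_nonneg μ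
  set g : ℝ := l * (1 + 2 * l ^ (1 - (J : ℝ))) with hg
  have hσ0 : (0 : ℝ) < 1 + 2 * l ^ (1 - (J : ℝ)) := by
    have : (0 : ℝ) < l ^ (1 - (J : ℝ)) := Real.rpow_pos_of_pos hl0 _
    nlinarith
  have hg0 : 0 < g := mul_pos hl0 hσ0
  have hJR : (0 : ℝ) < (J : ℝ) := by
    have : (0 : ℕ) < J := by omega
    exact_mod_cast this
  have hJne : J ≠ 0 := by omega
  have hne : Nonempty {C : Finset (X × ℝ) // C.Nonempty ∧ ∀ p ∈ C, p.2 ∈ Set.Ioi (0 : ℝ)} :=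
    ⟨⟨{((0 : X), (1 : ℝ))}, Finset.singleton_nonempty _, by
      intro p hp
      rw [Finset.mem_singleton] at hp
      subst hp
      exact Set.mem_Ioi.2 one_pos⟩⟩
  refine le_ciInf ?_
  rintro ⟨C, hCne, hCpos⟩
  show (J : ℝ)⁻¹ * (g⁻¹) ^ d * γ ≤ Phi μ C
  have hCpos' : ∀ p ∈ C, 0 < p.2 := fun p hp => Set.mem_Ioi.1 (hCpos p hp)
  -- the maximal radius
  obtain ⟨q₀, hq₀C, hq₀max⟩ := C.exists_max_image Prod.snd hCne
  set R := q₀.2 with hR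
  have hR0 : 0 < R := hCpos' q₀ hq₀C
  -- scale indices and block-top radii
  set nn : X × ℝ → ℤ := fun p => ⌊Real.logb l (R / p.2)⌋ with hnn
  set b : X × ℝ → ℝ := fun p => R * l ^ (-(nn p)) with hbdef
  have hb : ∀ p ∈ C, b p / l < p.2 ∧ p.2 ≤ b p := by
    intro p hp
    have hp2 : 0 < p.2 := hCpos' p hp
    have hy : 0 < R / p.2 := div_pos hR0 hp2
    have h1 : ((nn p : ℝ)) ≤ Real.logb l (R / p.2) := Int.floor_le _
    have h2 : Real.logb l (R / p.2) < (nn p : ℝ) + 1 := Int.lt_floor_add_one _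
    have e1 : (l : ℝ) ^ (nn p) ≤ R / p.2 := by
      have : l ^ ((nn p : ℝ)) ≤ l ^ Real.logb l (R / p.2) :=
        (Real.rpow_le_rpow_left_iff hl).2 h1
      rwa [Real.rpow_logb hl0 hlne1 hy, Real.rpow_intCast] at this
    have e2 : R / p.2 < (l : ℝ) ^ (nn p + 1) := by
      have : l ^ Real.logb l (R / p.2) < l ^ (((nn p + 1 : ℤ) : ℝ)) := by
        refine (Real.rpow_lt_rpow_left_iff hl).2 ?_
        push_cast
        exact h2
      rwa [Real.rpow_logb hl0 hlne1 hy, Real.rpow_intCast] at this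
    have hz1 : (0 : ℝ) < l ^ (nn p) := zpow_pos hl0 _
    have hz2 : (0 : ℝ) < l ^ (nn p + 1) := zpow_pos hl0 _
    have e1' : (l : ℝ) ^ (nn p) * p.2 ≤ R := by
      have := (le_div_iff₀ hp2).1 e1
      linarith
    have e2' : R < (l : ℝ) ^ (nn p + 1) * p.2 := by
      have := (div_lt_iff₀ hp2).1 e2
      linarith [mul_comm (p.2) ((l : ℝ) ^ (nn p + 1))]
    constructor
    · have hbl : b p / l = R / l ^ (nn p + 1) := by
        rw [hbdef]
        simp only
        rw [zpow_add₀ hl0.ne' (nn p) 1, zpow_one, zpow_neg]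
        field_simp
      rw [hbl, div_lt_iff₀ hz2]
      linarith [mul_comm (p.2) ((l : ℝ) ^ (nn p + 1))]
    · have hbl : b p = R / l ^ (nn p) := by
        rw [hbdef]
        simp only
        rw [zpow_neg, div_eq_mul_inv]
      rw [hbl, le_div_iff₀ hz1]
      linarith [mul_comm (p.2) ((l : ℝ) ^ (nn p))]
  -- trichotomy for pairs in the same residue class
  have htri2 : ∀ p ∈ C, ∀ q ∈ C, nn p % (J : ℤ) = nn q % (J : ℤ) →
      b p = b q ∨ l ^ J * b p ≤ b q ∨ l ^ J * b q ≤ b p := by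
    intro p hp q hq hres
    have key : ∀ u v : X × ℝ, nn u % (J : ℤ) = nn v % (J : ℤ) → nn u < nn v →
        l ^ J * b v ≤ b u := by
      intro u v huv hlt
      have hmod : Int.ModEq (J : ℤ) (nn u) (nn v) := huv
      have hdvd : (J : ℤ) ∣ nn v - nn u := Int.modEq_iff_dvd.1 hmod
      have hJle : (J : ℤ) ≤ nn v - nn u := Int.le_of_dvd (by omega) hdvd
      have hexp : (J : ℤ) - nn v ≤ -(nn u) := by omega
      have hz : (l : ℝ) ^ ((J : ℤ) - nn v) ≤ l ^ (-(nn u)) :=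
        zpow_le_zpow_right₀ hl.le hexp
      have hls : (l : ℝ) ^ J * (l : ℝ) ^ (-(nn v)) = (l : ℝ) ^ ((J : ℤ) - nn v) := by
        rw [sub_eq_add_neg, zpow_add₀ hl0.ne', zpow_natCast]
      calc l ^ J * b v = R * ((l : ℝ) ^ J * l ^ (-(nn v))) := by rw [hbdef]; ring
        _ = R * (l : ℝ) ^ ((J : ℤ) - nn v) := by rw [hls]
        _ ≤ R * (l : ℝ) ^ (-(nn u)) := by
            exact mul_le_mul_of_nonneg_left hz hR0.le
        _ = b u := by rw [hbdef]
    rcases lt_trichotomy (nn p) (nn q) with h | h | h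
    · exact Or.inr (Or.inr (key p q hres h))
    · left; rw [hbdef]; simp only [h]
    · exact Or.inr (Or.inl (key q p hres.symm h))
  -- the classes
  set Ci : ℕ → Finset (X × ℝ) := fun i => C.filter (fun p => nn p % (J : ℤ) = (i : ℤ))
    with hCi
  have hclasscover : (⋃ p ∈ C, closedBall p.1 p.2) ⊆
      ⋃ i ∈ Finset.range J, ⋃ p ∈ Ci i, closedBall p.1 p.2 := by
    intro y hy
    rw [Set.mem_iUnion₂] at hy
    obtain ⟨p, hp, hyp⟩ := hy
    have hmod0 : (0 : ℤ) ≤ nn p % (J : ℤ) := Int.emod_nonneg _ (by exact_mod_cast hJne)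
    have hJZ : (0 : ℤ) < (J : ℤ) := by omega
    have hmodJ : nn p % (J : ℤ) < (J : ℤ) := Int.emod_lt_of_pos _ hJZ
    refine Set.mem_iUnion₂.2 ⟨(nn p % (J : ℤ)).toNat, Finset.mem_range.2 ?_,
      Set.mem_iUnion₂.2 ⟨p, Finset.mem_filter.2 ⟨hp, ?_⟩, hyp⟩⟩
    · omega
    · rw [Int.toNat_of_nonneg hmod0]
  -- apply the multiscale lemma to each class
  have hex : ∀ i : ℕ, ∃ S, S ⊆ Ci i ∧ DisjointBalls S ∧
      ENNReal.ofReal γ * μ (⋃ p ∈ Ci i, closedBall p.1 p.2)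
        ≤ ENNReal.ofReal (g ^ (Module.finrank ℝ X))
            * μ (⋃ p ∈ S, closedBall p.1 p.2) := by
    intro i
    refine aux_lemB μ hl hJ (Ci i).card (Ci i) le_rfl b ?_ ?_
    · exact fun p hp => hb p (Finset.mem_filter.1 hp).1
    · intro p hp q hq
      obtain ⟨hpC, hpi⟩ := Finset.mem_filter.1 hp
      obtain ⟨hqC, hqi⟩ := Finset.mem_filter.1 hq
      exact htri2 p hpC q hqC (hpi.trans hqi.symm)
  choose Sf hSf1 hSf2 hSf3 using hex
  -- pick the best class
  obtain ⟨i₀, hi₀mem, hi₀max⟩ := (Finset.range J).exists_max_image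
    (fun i => μ (⋃ p ∈ Sf i, closedBall p.1 p.2)) ⟨0, Finset.mem_range.2 (by omega)⟩
  -- ENNReal chain
  have main : ENNReal.ofReal γ * μ (⋃ p ∈ C, closedBall p.1 p.2)
      ≤ ENNReal.ofReal (g ^ (Module.finrank ℝ X))
          * ((J : ENNReal) * μ (⋃ p ∈ Sf i₀, closedBall p.1 p.2)) := by
    calc ENNReal.ofReal γ * μ (⋃ p ∈ C, closedBall p.1 p.2)
        ≤ ENNReal.ofReal γ * ∑ i ∈ Finset.range J, μ (⋃ p ∈ Ci i, closedBall p.1 p.2) :=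
          mul_le_mul_right ((measure_mono hclasscover).trans
            (measure_biUnion_finset_le _ _)) _
      _ = ∑ i ∈ Finset.range J, ENNReal.ofReal γ * μ (⋃ p ∈ Ci i, closedBall p.1 p.2) :=
          Finset.mul_sum _ _ _
      _ ≤ ∑ i ∈ Finset.range J, ENNReal.ofReal (g ^ (Module.finrank ℝ X))
            * μ (⋃ p ∈ Sf i, closedBall p.1 p.2) :=
          Finset.sum_le_sum fun i _ => hSf3 i
      _ = ENNReal.ofReal (g ^ (Module.finrank ℝ X))
            * ∑ i ∈ Finset.range J, μ (⋃ p ∈ Sf i, closedBall p.1 p.2) :=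
          (Finset.mul_sum _ _ _).symm
      _ ≤ ENNReal.ofReal (g ^ (Module.finrank ℝ X))
            * ((J : ENNReal) * μ (⋃ p ∈ Sf i₀, closedBall p.1 p.2)) := by
          refine mul_le_mul_right ?_ _
          calc ∑ i ∈ Finset.range J, μ (⋃ p ∈ Sf i, closedBall p.1 p.2)
              ≤ (Finset.range J).card • μ (⋃ p ∈ Sf i₀, closedBall p.1 p.2) :=
                Finset.sum_le_card_nsmul _ _ _ fun i hi => hi₀max i hi
            _ = (J : ENNReal) * μ (⋃ p ∈ Sf i₀, closedBall p.1 p.2) := by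
                rw [Finset.card_range, nsmul_eq_mul]
  -- pass to real numbers
  set u := ballsUnion μ C with hu
  set v := ballsUnion μ (Sf i₀) with hv
  have hufin : μ (⋃ p ∈ C, closedBall p.1 p.2) ≠ ⊤ :=
    aux_measure_biUnion_ne_top μ C Prod.fst Prod.snd
  have hvfin : μ (⋃ p ∈ Sf i₀, closedBall p.1 p.2) ≠ ⊤ :=
    aux_measure_biUnion_ne_top μ (Sf i₀) Prod.fst Prod.snd
  have hreal : γ * u ≤ g ^ d * ((J : ℝ) * v) := by
    have hRfin : ENNReal.ofReal (g ^ (Module.finrank ℝ X))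
        * ((J : ENNReal) * μ (⋃ p ∈ Sf i₀, closedBall p.1 p.2)) ≠ ⊤ := by
      refine ENNReal.mul_ne_top ENNReal.ofReal_ne_top (ENNReal.mul_ne_top ?_ hvfin)
      exact ENNReal.natCast_ne_top J
    have h := ENNReal.toReal_mono hRfin main
    rw [ENNReal.toReal_mul, ENNReal.toReal_mul, ENNReal.toReal_mul,
      ENNReal.toReal_ofReal hγ0, ENNReal.toReal_ofReal (by positivity),
      ENNReal.toReal_natCast] at h
    rw [hd] at h
    exact h
  have hu0 : 0 < u := by
    obtain ⟨p₁, hp₁⟩ := hCne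
    have hsub : closedBall p₁.1 p₁.2 ⊆ ⋃ p ∈ C, closedBall p.1 p.2 := by
      intro y hy
      exact Set.mem_iUnion₂.2 ⟨p₁, hp₁, hy⟩
    have hpos : (0 : ENNReal) < μ (⋃ p ∈ C, closedBall p.1 p.2) :=
      lt_of_lt_of_le (Metric.measure_closedBall_pos μ p₁.1 (hCpos' p₁ hp₁)) (measure_mono hsub)
    exact ENNReal.toReal_pos hpos.ne' hufin
  have hratio : (J : ℝ)⁻¹ * (g⁻¹) ^ d * γ ≤ v / u := by
    rw [le_div_iff₀ hu0]
    have hvlow : γ * u / (g ^ d * (J : ℝ)) ≤ v := by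
      rw [div_le_iff₀ (by positivity)]
      calc γ * u ≤ g ^ d * ((J : ℝ) * v) := hreal
        _ = v * (g ^ d * (J : ℝ)) := by ring
    calc (J : ℝ)⁻¹ * (g⁻¹) ^ d * γ * u = γ * u / (g ^ d * (J : ℝ)) := by
          rw [inv_pow, div_eq_mul_inv, mul_inv]
          ring
      _ ≤ v := hvlow
  refine hratio.trans ?_
  exact aux_le_Phi μ ((hSf1 i₀).trans (Finset.filter_subset _ _)) (hSf2 i₀)
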